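/- Let b : ℕ^{r+1} → ℂ satisfy: b(k) = 0 unless k_{r+1} is odd, k_{r+1} ≥ 3, and k_i ≤ k_{r+1} − 1 for all 1 ≤ i ≤ r; and |b(k)| ≤ C·q^{(1/2+ε)|k| − 1} for all k. Then for every z ∈ ℂ^{r+1} with |z_i| ≤ q^{−1/2+ε} for 1 ≤ i ≤ r and |z_{r+1}| ≤ q^{−σ}, the family (b(k)·z^k)_{k∈ℕ^{r+1}} is absolutely summable and |Σ_k b(k)·z^k| ≤ C·q^{1/2−3σ+(4r+3)ε}·(1 − q^{−2ε})^{−r}·(1 − q^{1−2σ+(4r+2)ε})^{−1}. -/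

import Mathlib

open Finset

lemma tsum_pi_fin_prod (n : ℕ) (f : ℕ → ENNReal) :
    ∑' v : Fin n → ℕ, ∏ i, f (v i) = (∑' j, f j) ^ n := by
  induction n with
  | zero =>
    rw [tsum_eq_single (fun i => i.elim0)]
    · simp
    · intro v hv; exact absurd (funext fun i => i.elim0) hv
  | succ n ih =>
    calc ∑' v : Fin (n+1) → ℕ, ∏ i, f (v i)
        = ∑' p : ℕ × (Fin n → ℕ), ∏ i, f ((Fin.cons p.1 p.2 : Fin (n+1) → ℕ) i) := by
          rw [← (Fin.consEquiv (fun _ : Fin (n+1) => ℕ)).tsum_eq (fun v => ∏ i, f (v i))]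
          rfl
      _ = ∑' (x : ℕ) (v : Fin n → ℕ), f x * ∏ i, f (v i) := by
          rw [ENNReal.tsum_prod']
          apply tsum_congr; intro x; apply tsum_congr; intro v
          rw [Fin.prod_univ_succ]
          simp
      _ = (∑' j, f j) ^ (n+1) := by
          simp_rw [ENNReal.tsum_mul_left, ih, ENNReal.tsum_mul_right]
          rw [pow_succ, mul_comm]

/-- Estimate for the odd part of the local series: if the coefficients `b(k)` are supported
on tuples with `k_{r+1}` odd, `k_{r+1} ≥ 3` and `k_i ≤ k_{r+1} - 1` for `i ≤ r`, and satisfy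
`|b(k)| ≤ C q^{(1/2+ε)|k| - 1}`, then for `|z_i| ≤ q^{-1/2+ε}` (`i ≤ r`) and
`|z_{r+1}| ≤ q^{-σ}` the series `∑ b(k) z^k` is absolutely summable, with sum of absolute
value at most `C q^{1/2-3σ+(4r+3)ε} (1-q^{-2ε})^{-r} (1-q^{1-2σ+(4r+2)ε})^{-1}`. -/
theorem odd_part_estimate (r : ℕ) (hr : 1 ≤ r) (q : ℝ) (hq : 1 < q)
    (C : ℝ) (hC : 0 ≤ C) (ε σ : ℝ) (hε : 0 < ε) (hσ : 1 / 2 < σ)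
    (hcond : 1 - 2 * σ + (4 * (r : ℝ) + 2) * ε < 0)
    (b : (Fin (r + 1) → ℕ) → ℂ)
    (hsupp : ∀ k : Fin (r + 1) → ℕ,
      ¬(Odd (k (Fin.last r)) ∧ 3 ≤ k (Fin.last r) ∧
          ∀ i : Fin r, k i.castSucc ≤ k (Fin.last r) - 1) → b k = 0)
    (hbound : ∀ k : Fin (r + 1) → ℕ,
      ‖b k‖ ≤ C * q ^ ((1 / 2 + ε) * (∑ j, (k j : ℝ)) - 1))
    (z : Fin (r + 1) → ℂ)
    (hz : ∀ i : Fin r, ‖z i.castSucc‖ ≤ q ^ (-(1 / 2) + ε))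
    (hzlast : ‖z (Fin.last r)‖ ≤ q ^ (-σ)) :
    Summable (fun k : Fin (r + 1) → ℕ => ‖b k * ∏ j, z j ^ k j‖) ∧
    ‖∑' k : Fin (r + 1) → ℕ, b k * ∏ j, z j ^ k j‖ ≤
      C * q ^ (1 / 2 - 3 * σ + (4 * (r : ℝ) + 3) * ε) * ((1 - q ^ (-2 * ε))⁻¹) ^ r *
        (1 - q ^ (1 - 2 * σ + (4 * (r : ℝ) + 2) * ε))⁻¹ := by
  classical
  have hq0 : (0:ℝ) < q := lt_trans one_pos hq
  have hrp : ∀ t : ℝ, 0 < q ^ t := fun t => Real.rpow_pos_of_pos hq0 t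
  set x : ℝ := q ^ (-2 * ε) with hxdef
  have hx1 : x < 1 := Real.rpow_lt_one_of_one_lt_of_neg hq (by linarith)
  have hx0 : 0 < x := hrp _
  have hinvx : 0 ≤ (1 - x)⁻¹ := inv_nonneg.2 (by linarith)
  set e0 : ℝ := 1/2 + ε - σ + 2*(r:ℝ)*ε with he0def
  have hre : (4*(r:ℝ)+2)*ε = 4*(r:ℝ)*ε + 2*ε := by ring
  have he0 : e0 < 0 := by rw [he0def]; nlinarith [hcond]
  set y : ℝ := q ^ (1 - 2 * σ + (4 * (r : ℝ) + 2) * ε) with hydef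
  have hy1 : y < 1 := Real.rpow_lt_one_of_one_lt_of_neg hq hcond
  have hy0 : 0 < y := hrp _
  have hy2 : y = q ^ (2 * e0) := by rw [hydef, he0def]; congr 1; ring
  set D : ℝ := C * q ^ (-1 - 2*(r:ℝ)*ε) * ((1-x)⁻¹)^r with hDdef
  have hD0 : 0 ≤ D := by positivity
  set B : ℝ := C * q ^ (1 / 2 - 3 * σ + (4 * (r : ℝ) + 3) * ε) * ((1 - q ^ (-2 * ε))⁻¹) ^ r *
        (1 - q ^ (1 - 2 * σ + (4 * (r : ℝ) + 2) * ε))⁻¹ with hBdef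
  have hB0 : 0 ≤ B := by
    rw [hBdef]
    have : (0:ℝ) ≤ (1 - q ^ (1 - 2 * σ + (4 * (r : ℝ) + 2) * ε))⁻¹ := inv_nonneg.2 (by rw [← hydef]; linarith)
    positivity
  set F : (Fin (r+1) → ℕ) → ENNReal := fun k => (‖b k * ∏ j, z j ^ k j‖₊ : ENNReal) with hFdef
  set H : ℕ → ℕ → ENNReal := fun m j => if j ≤ m - 1 then ENNReal.ofReal (q ^ (2*ε*(j:ℝ))) else 0 with hHdef
  set cX : ℕ → ENNReal := fun m => if Odd m ∧ 3 ≤ m then ENNReal.ofReal (C * q ^ ((1/2+ε-σ)*(m:ℝ) - 1)) else 0 with hcXdef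
  set Ψ : ℕ × (Fin r → ℕ) → ENNReal := fun p => cX p.1 * ∏ i, H p.1 (p.2 i) with hΨdef
  set g : ℕ → ENNReal := fun m => if Odd m ∧ 3 ≤ m then ENNReal.ofReal (D * q ^ (e0 * (m:ℝ))) else 0 with hgdef
  -- pointwise bound
  have key : ∀ k : Fin (r+1) → ℕ, ‖b k * ∏ j, z j ^ k j‖ ≤
      C * q ^ ((1/2+ε-σ)*((k (Fin.last r)):ℝ) - 1 + 2*ε*(∑ i : Fin r, (k i.castSucc : ℝ))) := by
    intro k
    rw [norm_mul, norm_prod]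
    have h1 : ‖b k‖ ≤ C * q ^ ((1 / 2 + ε) * (∑ j, (k j : ℝ)) - 1) := by
      exact hbound k
    have h2 : ∏ j, ‖z j ^ k j‖ ≤
        (∏ i : Fin r, (q ^ (-(1/2) + ε)) ^ (k i.castSucc)) * (q ^ (-σ)) ^ (k (Fin.last r)) := by
      simp only [norm_pow]
      rw [Fin.prod_univ_castSucc (f := fun j => ‖z j‖ ^ k j)]
      apply mul_le_mul
      · apply Finset.prod_le_prod (fun i _ => by positivity)
        intro i _
        apply pow_le_pow_left₀ (norm_nonneg _)
        exact hz i
      · apply pow_le_pow_left₀ (norm_nonneg _)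
        exact hzlast
      · positivity
      · apply Finset.prod_nonneg; intro i _; positivity
    have h3 : ‖b k‖ * ∏ j, ‖z j ^ k j‖ ≤
        (C * q ^ ((1 / 2 + ε) * (∑ j, (k j : ℝ)) - 1)) *
        ((∏ i : Fin r, (q ^ (-(1/2) + ε)) ^ (k i.castSucc)) * (q ^ (-σ)) ^ (k (Fin.last r))) := by
      apply mul_le_mul h1 h2 (Finset.prod_nonneg fun j _ => norm_nonneg _)
      positivity
    refine h3.trans (le_of_eq ?_)
    have e1 : ∀ (c : ℝ) (n : ℕ), (q ^ c) ^ n = q ^ (c * (n:ℝ)) := fun c n => by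
      rw [← Real.rpow_natCast (q ^ c) n, ← Real.rpow_mul hq0.le]
    simp_rw [e1]
    rw [← Real.rpow_sum_of_pos hq0, mul_assoc, ← Real.rpow_add hq0, ← Real.rpow_add hq0]
    congr 1
    rw [Fin.sum_univ_castSucc (f := fun j => (k j : ℝ)), ← Finset.mul_sum]
    ring
  -- factored form
  have split : ∀ (m : ℕ) (v : Fin r → ℕ),
      ENNReal.ofReal (C * q ^ ((1/2+ε-σ)*(m:ℝ) - 1 + 2*ε*(∑ i, (v i:ℝ)))) =
      ENNReal.ofReal (C * q ^ ((1/2+ε-σ)*(m:ℝ) - 1)) * ∏ i, ENNReal.ofReal (q ^ (2*ε*(v i:ℝ))) := by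
    intro m v
    have h0 : C * q ^ ((1/2+ε-σ)*(m:ℝ) - 1 + 2*ε*(∑ i, (v i:ℝ))) =
        (C * q ^ ((1/2+ε-σ)*(m:ℝ) - 1)) * ∏ i, q ^ (2*ε*(v i:ℝ)) := by
      rw [Real.rpow_add hq0, Finset.mul_sum, Real.rpow_sum_of_pos hq0, mul_assoc]
    rw [h0, ENNReal.ofReal_mul (by positivity),
      ENNReal.ofReal_prod_of_nonneg (fun i _ => (hrp _).le)]
  have hΨbd : ∀ p : ℕ × (Fin r → ℕ), F (Fin.snoc p.2 p.1) ≤ Ψ p := by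
    rintro ⟨m, v⟩
    have hk1 : (Fin.snoc v m : Fin (r+1) → ℕ) (Fin.last r) = m := by simp
    have hk2 : ∀ i : Fin r, (Fin.snoc v m : Fin (r+1) → ℕ) i.castSucc = v i := by
      intro i; simp
    by_cases hs : Odd m ∧ 3 ≤ m ∧ ∀ i : Fin r, v i ≤ m - 1
    · have hm' : Odd m ∧ 3 ≤ m := ⟨hs.1, hs.2.1⟩
      have hcx : cX m = ENNReal.ofReal (C * q ^ ((1/2+ε-σ)*(m:ℝ) - 1)) := by
        simp only [hcXdef, if_pos hm']
      have hH : ∀ i : Fin r, H m (v i) = ENNReal.ofReal (q ^ (2*ε*(v i:ℝ))) := by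
        intro i
        have hvi := hs.2.2 i
        simp only [hHdef, if_pos hvi]
      have hkey := key (Fin.snoc v m)
      rw [hk1] at hkey
      have hsum : (∑ i : Fin r, (((Fin.snoc v m : Fin (r+1) → ℕ) i.castSucc) : ℝ)) =
          ∑ i : Fin r, (v i : ℝ) := Finset.sum_congr rfl fun i _ => by rw [hk2 i]
      rw [hsum] at hkey
      calc F (Fin.snoc v m)
          = ENNReal.ofReal ‖b (Fin.snoc v m) * ∏ j, z j ^ (Fin.snoc v m : Fin (r+1) → ℕ) j‖ := by
            rw [hFdef, ← coe_nnnorm, ENNReal.ofReal_coe_nnreal]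
        _ ≤ ENNReal.ofReal (C * q ^ ((1/2+ε-σ)*(m:ℝ) - 1 + 2*ε*(∑ i : Fin r, (v i : ℝ)))) :=
            ENNReal.ofReal_le_ofReal hkey
        _ = Ψ (m, v) := by
            rw [split m v, hΨdef]; simp only [hcx]
            congr 1
            exact Finset.prod_congr rfl fun i _ => (hH i).symm
    · have hb : b (Fin.snoc v m) = 0 := by
        apply hsupp
        simp only [hk1, hk2]
        exact hs
      rw [hFdef]; simp only [hb, zero_mul, nnnorm_zero, ENNReal.coe_zero]
      exact zero_le
  have geo : ∀ m : ℕ, 1 ≤ m → (∑' j, H m j) ≤ ENNReal.ofReal (q ^ (2*ε*((m:ℝ)-1)) * (1-x)⁻¹) := by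
    intro m hm
    have hsub : ∀ j ∉ Finset.range m, H m j = 0 := by
      intro j hj
      rw [hHdef]; simp only [ite_eq_right_iff]
      intro hle
      exact absurd (Finset.mem_range.mpr (by omega)) hj
    rw [tsum_eq_sum hsub]
    have hstep : ∑ j ∈ Finset.range m, H m j =
        ENNReal.ofReal (∑ j ∈ Finset.range m, q ^ (2*ε*(j:ℝ))) := by
      rw [ENNReal.ofReal_sum_of_nonneg (fun j _ => (hrp _).le)]
      refine Finset.sum_congr rfl fun j hj => ?_
      rw [hHdef]; simp only [if_pos (by have := Finset.mem_range.mp hj; omega : j ≤ m - 1)]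
    rw [hstep]
    apply ENNReal.ofReal_le_ofReal
    have hterm : ∀ j ∈ Finset.range m, q ^ (2*ε*(j:ℝ)) =
        q ^ (2*ε*((m:ℝ)-1)) * x ^ (m - 1 - j) := by
      intro j hj
      have hj' : j < m := Finset.mem_range.mp hj
      have hc : ((m - 1 - j : ℕ) : ℝ) = (m:ℝ) - 1 - (j:ℝ) := by
        rw [Nat.cast_sub (by omega), Nat.cast_sub hm, Nat.cast_one]
      rw [hxdef, ← Real.rpow_natCast (q ^ (-2*ε)) (m - 1 - j), ← Real.rpow_mul hq0.le,
        ← Real.rpow_add hq0, hc]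
      congr 1
      ring
    rw [Finset.sum_congr rfl hterm, ← Finset.mul_sum,
      Finset.sum_range_reflect (fun t => x ^ t) m]
    apply mul_le_mul_of_nonneg_left _ (hrp _).le
    have hsumm : Summable (fun j : ℕ => x ^ j) := summable_geometric_of_lt_one hx0.le hx1
    have := Summable.sum_le_tsum (Finset.range m) (fun j _ => by positivity) hsumm
    rwa [tsum_geometric_of_lt_one hx0.le hx1] at this
  have hg : ∀ m : ℕ, cX m * (∑' j, H m j)^r ≤ g m := by
    intro m
    by_cases hm : Odd m ∧ 3 ≤ m
    · rw [hgdef, hcXdef]; simp only [if_pos hm]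
      have h1 : (∑' j, H m j) ^ r ≤ (ENNReal.ofReal (q ^ (2*ε*((m:ℝ)-1)) * (1-x)⁻¹)) ^ r :=
        pow_le_pow_left' (geo m (by omega)) r
      calc ENNReal.ofReal (C * q ^ ((1/2+ε-σ)*(m:ℝ) - 1)) * (∑' j, H m j) ^ r
          ≤ ENNReal.ofReal (C * q ^ ((1/2+ε-σ)*(m:ℝ) - 1)) *
            (ENNReal.ofReal (q ^ (2*ε*((m:ℝ)-1)) * (1-x)⁻¹)) ^ r := mul_le_mul_right h1 _
        _ = ENNReal.ofReal (D * q ^ (e0 * (m:ℝ))) := by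
            rw [← ENNReal.ofReal_pow (by positivity), ← ENNReal.ofReal_mul (by positivity)]
            congr 1
            rw [mul_pow, ← Real.rpow_natCast (q ^ (2*ε*((m:ℝ)-1))) r, ← Real.rpow_mul hq0.le]
            have hq2 : q ^ ((1/2+ε-σ)*(m:ℝ) - 1) * q ^ (2*ε*((m:ℝ)-1)*(r:ℝ)) =
                q ^ (-1 - 2*(r:ℝ)*ε) * q ^ (e0 * (m:ℝ)) := by
              rw [← Real.rpow_add hq0, ← Real.rpow_add hq0, he0def]
              congr 1
              ring
            calc C * q ^ ((1/2+ε-σ)*(m:ℝ) - 1) *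
                  (q ^ (2*ε*((m:ℝ)-1)*(r:ℝ)) * ((1-x)⁻¹) ^ r)
                = C * ((1-x)⁻¹) ^ r *
                  (q ^ ((1/2+ε-σ)*(m:ℝ) - 1) * q ^ (2*ε*((m:ℝ)-1)*(r:ℝ))) := by ring
              _ = C * ((1-x)⁻¹) ^ r * (q ^ (-1 - 2*(r:ℝ)*ε) * q ^ (e0 * (m:ℝ))) := by rw [hq2]
              _ = D * q ^ (e0 * (m:ℝ)) := by rw [hDdef]; ring
    · rw [hgdef, hcXdef]; simp only [if_neg hm, zero_mul, le_refl]
  have total : ∑' k, F k ≤ ENNReal.ofReal B := by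
    have hinj : Function.Injective (fun n : ℕ => 2*n+3) := by
      intro a b hab
      simp only at hab
      omega
    calc ∑' k, F k
        = ∑' p : ℕ × (Fin r → ℕ), F ((Fin.snocEquiv (fun _ => ℕ)) p) :=
          ((Fin.snocEquiv (fun _ => ℕ)).tsum_eq F).symm
      _ ≤ ∑' p : ℕ × (Fin r → ℕ), Ψ p := ENNReal.tsum_le_tsum fun p => hΨbd p
      _ = ∑' (m : ℕ) (v : Fin r → ℕ), Ψ (m, v) := ENNReal.tsum_prod'
      _ = ∑' m : ℕ, cX m * (∑' j, H m j) ^ r := by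
          refine tsum_congr fun m => ?_
          rw [hΨdef]; simp only
          rw [ENNReal.tsum_mul_left, tsum_pi_fin_prod r (H m)]
      _ ≤ ∑' m, g m := ENNReal.tsum_le_tsum hg
      _ = ∑' n : ℕ, g (2*n+3) := by
          refine (Function.Injective.tsum_eq hinj ?_).symm
          intro m hm
          rw [Function.mem_support] at hm
          by_cases h : Odd m ∧ 3 ≤ m
          · obtain ⟨t, ht⟩ := h.1
            have h2 := h.2
            refine ⟨t - 1, ?_⟩
            simp only
            omega
          · exact absurd (by rw [hgdef]; simp only [if_neg h]) hm
      _ = ∑' n : ℕ, ENNReal.ofReal (D * q ^ (3*e0)) * (ENNReal.ofReal y) ^ n := by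
          refine tsum_congr fun n => ?_
          have hodd : Odd (2*n+3) ∧ 3 ≤ 2*n+3 := ⟨⟨n+1, by ring⟩, by omega⟩
          have hq3 : q ^ (e0 * ((2*n+3 : ℕ) : ℝ)) = q ^ (3*e0) * y ^ n := by
            rw [hy2, ← Real.rpow_natCast (q ^ (2*e0)) n, ← Real.rpow_mul hq0.le,
              ← Real.rpow_add hq0]
            congr 1
            push_cast
            ring
          simp only [hgdef, if_pos hodd]
          rw [hq3, ENNReal.ofReal_mul hD0, ENNReal.ofReal_mul (hrp _).le,
            ENNReal.ofReal_pow hy0.le, ENNReal.ofReal_mul hD0, mul_assoc]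
      _ = ENNReal.ofReal (D * q ^ (3*e0)) * (1 - ENNReal.ofReal y)⁻¹ := by
          rw [ENNReal.tsum_mul_left, ENNReal.tsum_geometric]
      _ = ENNReal.ofReal B := by
          rw [← ENNReal.ofReal_one, ← ENNReal.ofReal_sub _ hy0.le,
            ← ENNReal.ofReal_inv_of_pos (by linarith : (0:ℝ) < 1 - y),
            ← ENNReal.ofReal_mul (by positivity)]
          congr 1
          have hqq : q ^ ((1:ℝ) / 2 - 3 * σ + (4 * (r : ℝ) + 3) * ε) =
              q ^ (-1 - 2*(r:ℝ)*ε) * q ^ (3*e0) := by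
            rw [← Real.rpow_add hq0, he0def]
            congr 1
            ring
          rw [hBdef, hDdef, hxdef, hydef, hqq]
          ring
  -- conclusion
  have hne : (∑' k, F k) ≠ ⊤ := (lt_of_le_of_lt total ENNReal.ofReal_lt_top).ne
  have hsumnn : Summable (fun k : Fin (r+1) → ℕ => ‖b k * ∏ j, z j ^ k j‖₊) :=
    ENNReal.tsum_coe_ne_top_iff_summable.mp hne
  have hsumnorm : Summable (fun k : Fin (r+1) → ℕ => ‖b k * ∏ j, z j ^ k j‖) := by
    simpa using NNReal.summable_coe.mpr hsumnn
  have habs : (fun k : Fin (r+1) → ℕ => ‖b k * ∏ j, z j ^ k j‖) =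
      (fun k : Fin (r+1) → ℕ => ‖b k * ∏ j, z j ^ k j‖) := by
    rfl
  constructor
  · rw [habs]; exact hsumnorm
  · have h1 : ‖∑' k : Fin (r+1) → ℕ, b k * ∏ j, z j ^ k j‖ ≤
        ∑' k : Fin (r+1) → ℕ, ‖b k * ∏ j, z j ^ k j‖ := norm_tsum_le_tsum_norm hsumnorm
    have h2 : (∑' k : Fin (r+1) → ℕ, ‖b k * ∏ j, z j ^ k j‖) ≤ B := by
      have hc : ((∑' k : Fin (r+1) → ℕ, ‖b k * ∏ j, z j ^ k j‖₊ : NNReal) : ENNReal) ≤ ENNReal.ofReal B := by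
        rw [ENNReal.coe_tsum hsumnn]; exact total
      have hc2 : (∑' k : Fin (r+1) → ℕ, ‖b k * ∏ j, z j ^ k j‖₊ : NNReal) ≤ B.toNNReal := by
        rwa [ENNReal.ofReal, ENNReal.coe_le_coe] at hc
      calc (∑' k : Fin (r+1) → ℕ, ‖b k * ∏ j, z j ^ k j‖)
          = ((∑' k : Fin (r+1) → ℕ, ‖b k * ∏ j, z j ^ k j‖₊ : NNReal) : ℝ) := by
            rw [NNReal.coe_tsum]; simp
        _ ≤ (B.toNNReal : ℝ) := by exact_mod_cast hc2
        _ = B := Real.coe_toNNReal B hB0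
    exact le_trans h1 (by rw [hBdef] at h2; exact h2)
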